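/- Consider a polynomial ODE system x′ = f(x) with f_i ∈ ℝ[x₁,…,x_n], and observables x_obs = Ax for A ∈ ℝ^{s×n} with linearly independent rows. Suppose L₁, L₂ ∈ ℝ^{m×n} are both constrained linear lumpings with observables x_obs, and m is the smallest possible dimension of a constrained linear lumping with these observables. Then L₁ and L₂ have the same row space; equivalently, L₂ = T·L₁ for some invertible real m×m matrix T. -/

import Mathlib

open MvPolynomial

/-- `L` is a lumping of the polynomial ODE system `x' = f(x)`: `L` has full row rank and
there is a polynomial vector `g` with `L · f(x) = g(L · x)` identically. -/
def IsLumping {n m : ℕ} (f : Fin n → MvPolynomial (Fin n) ℝ)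
    (L : Matrix (Fin m) (Fin n) ℝ) : Prop :=
  L.rank = m ∧ ∃ g : Fin m → MvPolynomial (Fin m) ℝ,
    ∀ i, (∑ j, C (L i j) * f j) =
      aeval (fun k : Fin m => ∑ j, C (L k j) * X j) (g i)

/-- `L` is a constrained linear lumping of `x' = f(x)` with observables `x_obs = A x`:
`L` is a lumping and every row of `A` lies in the row space of `L`. -/
def IsCLL {n m s : ℕ} (f : Fin n → MvPolynomial (Fin n) ℝ)
    (A : Matrix (Fin s) (Fin n) ℝ) (L : Matrix (Fin m) (Fin n) ℝ) : Prop :=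
  IsLumping f L ∧ ∀ i, A i ∈ Submodule.span ℝ (Set.range L)

lemma evalAeval {n m : ℕ} (φ : Fin m → MvPolynomial (Fin n) ℝ) (q : MvPolynomial (Fin m) ℝ)
    (x : Fin n → ℝ) :
    eval x (aeval φ q) = eval (fun k => eval x (φ k)) q := by
  rw [MvPolynomial.aeval_eq_bind₁, MvPolynomial.hom_bind₁]
  have : (eval x).comp (C : ℝ →+* MvPolynomial (Fin n) ℝ) = RingHom.id ℝ :=
    RingHom.ext fun r => eval_C _
  rw [this]; rfl

/-- Evaluation of the `v`-combination of the system polynomials only depends on `L·x`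
when `v` is in the row space of a lumping `L`. -/
lemma lumping_eval_eq {n m : ℕ} {f : Fin n → MvPolynomial (Fin n) ℝ}
    {L : Matrix (Fin m) (Fin n) ℝ} (hL : IsLumping f L) {v : Fin n → ℝ}
    (hv : v ∈ Submodule.span ℝ (Set.range L)) (x y : Fin n → ℝ)
    (hxy : ∀ i, ∑ j, L i j * x j = ∑ j, L i j * y j) :
    eval x (∑ j, C (v j) * f j) = eval y (∑ j, C (v j) * f j) := by
  obtain ⟨c, hc⟩ := (Submodule.mem_span_range_iff_exists_fun ℝ).mp hv
  obtain ⟨-, g, hg⟩ := hL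
  have key : (∑ j, C (v j) * f j) = ∑ i, C (c i) * (∑ j, C (L i j) * f j) := by
    have hvj : ∀ j, v j = ∑ i, c i * L i j := by
      intro j; rw [← hc]; simp
    calc ∑ j, C (v j) * f j = ∑ j, ∑ i, (C (c i) * C (L i j)) * f j := by
          refine Finset.sum_congr rfl fun j _ => ?_
          rw [hvj j, map_sum, Finset.sum_mul]
          simp [C_mul]
      _ = ∑ i, C (c i) * (∑ j, C (L i j) * f j) := by
          rw [Finset.sum_comm]
          simp [Finset.mul_sum, mul_assoc]
  have ev : ∀ z : Fin n → ℝ, eval z (∑ j, C (v j) * f j)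
      = ∑ i, c i * eval (fun k => ∑ j, L k j * z j) (g i) := by
    intro z
    rw [key, map_sum]
    refine Finset.sum_congr rfl fun i _ => ?_
    rw [eval_mul, eval_C, hg i, evalAeval]
    have h2 : (fun k => eval z (∑ j, C (L k j) * X j)) = fun k => ∑ j, L k j * z j := by
      funext k; simp
    rw [h2]
  rw [ev x, ev y]
  have : (fun k => ∑ j, L k j * x j) = fun k => ∑ j, L k j * y j := funext hxy
  rw [this]

/-- A polynomial whose evaluation only depends on `L·x` for a full-row-rank `L` is a
polynomial in the linear forms given by the rows of `L`. -/
lemma exists_poly_of_invariant {n m : ℕ} (L : Matrix (Fin m) (Fin n) ℝ) (hrank : L.rank = m)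
    (p : MvPolynomial (Fin n) ℝ)
    (hp : ∀ x y : Fin n → ℝ, (∀ i, ∑ j, L i j * x j = ∑ j, L i j * y j)
      → eval x p = eval y p) :
    ∃ q : MvPolynomial (Fin m) ℝ, p = aeval (fun k : Fin m => ∑ j, C (L k j) * X j) q := by
  have hsurj : Function.Surjective L.mulVecLin := by
    rw [← LinearMap.range_eq_top]
    apply Submodule.eq_top_of_finrank_eq
    rw [← Matrix.rank, hrank]
    simp [Module.finrank_fintype_fun_eq_card]
  obtain ⟨R', hR'⟩ := L.mulVecLin.exists_rightInverse_of_surjective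
    (LinearMap.range_eq_top.2 hsurj)
  refine ⟨aeval (fun j : Fin n => ∑ k, C (LinearMap.toMatrix' R' j k) * X k) p, ?_⟩
  set R : Matrix (Fin n) (Fin m) ℝ := LinearMap.toMatrix' R' with hR
  apply MvPolynomial.funext
  intro x
  rw [evalAeval, evalAeval]
  set z : Fin m → ℝ := fun k => eval x (∑ j, C (L k j) * X j) with hz
  have hzv : z = L.mulVec x := by
    funext k; simp [hz, Matrix.mulVec, dotProduct]
  set x' : Fin n → ℝ := fun j => eval z (∑ k, C (R j k) * X k) with hx'
  have hx'v : x' = R.mulVec z := by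
    funext j; simp [hx', Matrix.mulVec, dotProduct]
  have hRz : ∀ w, R.mulVec w = R' w := by
    intro w
    rw [hR, ← Matrix.toLin'_apply, Matrix.toLin'_toMatrix']
  have hLx' : L.mulVec x' = L.mulVec x := by
    rw [hx'v, hRz, hzv, ← Matrix.mulVecLin_apply, ← LinearMap.comp_apply, hR',
      LinearMap.id_apply]
  refine (hp x' x fun i => ?_).symm
  have := congrFun hLx' i
  simpa [Matrix.mulVec, dotProduct] using this

/-- Orthogonal decomposition: a vector orthogonal to `V₁ ⊓ V₂` splits as a sum of a vector
orthogonal to `V₁` and one orthogonal to `V₂`. -/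
lemma perp_decomp {n : ℕ} (V₁ V₂ : Submodule ℝ (Fin n → ℝ)) (d : Fin n → ℝ)
    (hd : ∀ v ∈ V₁ ⊓ V₂, ∑ j, v j * d j = 0) :
    ∃ k₁ k₂ : Fin n → ℝ, d = k₁ + k₂ ∧ (∀ v ∈ V₁, ∑ j, v j * k₁ j = 0) ∧
      (∀ v ∈ V₂, ∑ j, v j * k₂ j = 0) := by
  classical
  let e : (Fin n → ℝ) ≃ₗ[ℝ] EuclideanSpace ℝ (Fin n) := (WithLp.linearEquiv 2 ℝ _).symm
  let W₁ : Submodule ℝ (EuclideanSpace ℝ (Fin n)) := V₁.map e.toLinearMap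
  let W₂ : Submodule ℝ (EuclideanSpace ℝ (Fin n)) := V₂.map e.toLinearMap
  have inner_eq : ∀ a b : Fin n → ℝ, inner ℝ (e a) (e b) = ∑ j, a j * b j := by
    intro a b
    simp [e, PiLp.inner_apply, RCLike.inner_apply, mul_comm]
  have hmem : (e d) ∈ (W₁ ⊓ W₂)ᗮ := by
    rw [Submodule.mem_orthogonal _ _]
    rintro u ⟨⟨v₁, hv₁, rfl⟩, hu₂⟩
    have hv₂ : v₁ ∈ V₂ := by
      obtain ⟨v₂, hv₂, hvv⟩ := hu₂
      have : v₂ = v₁ := e.injective hvv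
      rwa [this] at hv₂
    rw [LinearEquiv.coe_coe, inner_eq]
    exact hd v₁ ⟨hv₁, hv₂⟩
  have horth : (W₁ ⊓ W₂)ᗮ = W₁ᗮ ⊔ W₂ᗮ := by
    calc (W₁ ⊓ W₂)ᗮ = (W₁ᗮᗮ ⊓ W₂ᗮᗮ)ᗮ := by
          rw [Submodule.orthogonal_orthogonal, Submodule.orthogonal_orthogonal]
      _ = ((W₁ᗮ ⊔ W₂ᗮ)ᗮ)ᗮ := by rw [Submodule.inf_orthogonal]
      _ = W₁ᗮ ⊔ W₂ᗮ := Submodule.orthogonal_orthogonal _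
  rw [horth] at hmem
  obtain ⟨w₁, hw₁, w₂, hw₂, hsum⟩ := Submodule.mem_sup.mp hmem
  refine ⟨e.symm w₁, e.symm w₂, ?_, ?_, ?_⟩
  · apply e.injective
    rw [map_add]
    simp only [LinearEquiv.apply_symm_apply]
    exact hsum.symm
  · intro v hv
    have := ((Submodule.mem_orthogonal _ _).mp hw₁) (e v) ⟨v, hv, rfl⟩
    rwa [show w₁ = e (e.symm w₁) from (e.apply_symm_apply w₁).symm, inner_eq] at this
  · intro v hv
    have := ((Submodule.mem_orthogonal _ _).mp hw₂) (e v) ⟨v, hv, rfl⟩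
    rwa [show w₂ = e (e.symm w₂) from (e.apply_symm_apply w₂).symm, inner_eq] at this

/-- The intersection of the row spaces of two constrained linear lumpings is again a
constrained linear lumping (on a basis of the intersection). -/
lemma isCLL_inf {n m s : ℕ} {f : Fin n → MvPolynomial (Fin n) ℝ}
    {A : Matrix (Fin s) (Fin n) ℝ} {L₁ L₂ : Matrix (Fin m) (Fin n) ℝ}
    (h1 : IsCLL f A L₁) (h2 : IsCLL f A L₂) :
    ∃ (L : Matrix (Fin (Module.finrank ℝ
        (Submodule.span ℝ (Set.range L₁) ⊓ Submodule.span ℝ (Set.range L₂) :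
          Submodule ℝ (Fin n → ℝ)))) (Fin n) ℝ),
      IsCLL f A L ∧ Submodule.span ℝ (Set.range L)
        = Submodule.span ℝ (Set.range L₁) ⊓ Submodule.span ℝ (Set.range L₂) := by
  classical
  set V₁ := Submodule.span ℝ (Set.range L₁) with hV₁
  set V₂ := Submodule.span ℝ (Set.range L₂) with hV₂
  set V := V₁ ⊓ V₂ with hV
  set m' := Module.finrank ℝ V with hm'
  let b : Module.Basis (Fin m') ℝ V := Module.finBasis ℝ V
  set L : Matrix (Fin m') (Fin n) ℝ := Matrix.of (fun i => ((b i : Fin n → ℝ))) with hLdef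
  have hli : LinearIndependent ℝ (fun i => ((b i : Fin n → ℝ))) :=
    b.linearIndependent.map' V.subtype (Submodule.ker_subtype V)
  have hrank : L.rank = m' := by have := hli.rank_matrix; simp at this; exact this
  have hspan : Submodule.span ℝ (Set.range L) = V := by
    have : Set.range L = V.subtype '' (Set.range b) := by
      rw [show Set.range L = Set.range (fun i => ((b i : Fin n → ℝ))) from rfl,
        ← Set.range_comp]; rfl
    rw [this, Submodule.span_image, b.span_eq, Submodule.map_top, Submodule.range_subtype]
  -- invariance of each row polynomial
  have hinv : ∀ i : Fin m', ∀ x y : Fin n → ℝ,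
      (∀ k, ∑ j, L k j * x j = ∑ j, L k j * y j) →
      eval x (∑ j, C (L i j) * f j) = eval y (∑ j, C (L i j) * f j) := by
    intro i x y hxy
    set d : Fin n → ℝ := y - x with hdd
    have hd : ∀ v ∈ V, ∑ j, v j * d j = 0 := by
      intro v hv
      rw [← hspan] at hv
      obtain ⟨c, hc⟩ := (Submodule.mem_span_range_iff_exists_fun ℝ).mp hv
      have hvj : ∀ j, v j = ∑ k, c k * L k j := by
        intro j; rw [← hc]; simp
      have : ∑ j, v j * d j = ∑ k, c k * (∑ j, L k j * y j - ∑ j, L k j * x j) := by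
        calc ∑ j, v j * d j = ∑ j, ∑ k, c k * (L k j * d j) := by
              refine Finset.sum_congr rfl fun j _ => ?_
              rw [hvj j, Finset.sum_mul]
              simp [mul_assoc]
          _ = ∑ k, c k * (∑ j, L k j * y j - ∑ j, L k j * x j) := by
              rw [Finset.sum_comm]
              refine Finset.sum_congr rfl fun k _ => ?_
              rw [← Finset.mul_sum]
              congr 1
              rw [← Finset.sum_sub_distrib]
              refine Finset.sum_congr rfl fun j _ => ?_
              simp [hdd, mul_sub]
      rw [this]
      refine Finset.sum_eq_zero fun k _ => ?_
      rw [hxy k]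
      ring
    obtain ⟨k₁, k₂, hdk, hk₁, hk₂⟩ := perp_decomp V₁ V₂ d hd
    have hrow₁ : (L i : Fin n → ℝ) ∈ V₁ := by
      have : (L i : Fin n → ℝ) ∈ V := by
        rw [← hspan]; exact Submodule.subset_span ⟨i, rfl⟩
      exact this.1
    have hrow₂ : (L i : Fin n → ℝ) ∈ V₂ := by
      have : (L i : Fin n → ℝ) ∈ V := by
        rw [← hspan]; exact Submodule.subset_span ⟨i, rfl⟩
      exact this.2
    have step1 : eval x (∑ j, C (L i j) * f j) = eval (x + k₁) (∑ j, C (L i j) * f j) := by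
      refine lumping_eval_eq h1.1 hrow₁ x (x + k₁) fun r => ?_
      have h0 : ∑ j, L₁ r j * k₁ j = 0 := hk₁ (L₁ r) (Submodule.subset_span ⟨r, rfl⟩)
      calc ∑ j, L₁ r j * x j = ∑ j, L₁ r j * x j + ∑ j, L₁ r j * k₁ j := by rw [h0, add_zero]
        _ = ∑ j, L₁ r j * (x + k₁) j := by
            rw [← Finset.sum_add_distrib]
            refine Finset.sum_congr rfl fun j _ => ?_
            simp [mul_add]
    have step2 : eval (x + k₁) (∑ j, C (L i j) * f j)
        = eval (x + k₁ + k₂) (∑ j, C (L i j) * f j) := by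
      refine lumping_eval_eq h2.1 hrow₂ (x + k₁) (x + k₁ + k₂) fun r => ?_
      have h0 : ∑ j, L₂ r j * k₂ j = 0 := hk₂ (L₂ r) (Submodule.subset_span ⟨r, rfl⟩)
      calc ∑ j, L₂ r j * (x + k₁) j
          = ∑ j, L₂ r j * (x + k₁) j + ∑ j, L₂ r j * k₂ j := by rw [h0, add_zero]
        _ = ∑ j, L₂ r j * (x + k₁ + k₂) j := by
            rw [← Finset.sum_add_distrib]
            refine Finset.sum_congr rfl fun j _ => ?_
            simp [mul_add]
    have hxyd : x + k₁ + k₂ = y := by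
      rw [add_assoc, ← hdk, hdd]
      abel
    rw [step1, step2, hxyd]
  -- build g
  have hq : ∀ i : Fin m', ∃ q : MvPolynomial (Fin m') ℝ,
      (∑ j, C (L i j) * f j) = aeval (fun k : Fin m' => ∑ j, C (L k j) * X j) q :=
    fun i => exists_poly_of_invariant L hrank _ (hinv i)
  choose g hg using hq
  refine ⟨L, ⟨⟨hrank, g, hg⟩, ?_⟩, hspan⟩
  intro i
  rw [hspan]
  exact ⟨h1.2 i, h2.2 i⟩

/-- If `L₁, L₂` are constrained linear lumpings with observables
`x_obs = A x` of the smallest possible dimension `m`, then they have the same row space;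
equivalently `L₂ = T · L₁` for some invertible `T`. -/
theorem minimal_constrained_lumpings_equivalent
    (n m s : ℕ) (f : Fin n → MvPolynomial (Fin n) ℝ)
    (A : Matrix (Fin s) (Fin n) ℝ) (hA : LinearIndependent ℝ A)
    (L₁ L₂ : Matrix (Fin m) (Fin n) ℝ)
    (h1 : IsCLL f A L₁) (h2 : IsCLL f A L₂)
    (hmin : ∀ (m' : ℕ) (L : Matrix (Fin m') (Fin n) ℝ), IsCLL f A L → m ≤ m') :
    Submodule.span ℝ (Set.range L₁) = Submodule.span ℝ (Set.range L₂) ∧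
      ∃ T : Matrix (Fin m) (Fin m) ℝ, IsUnit T ∧ L₂ = T * L₁ := by
  classical
  obtain ⟨L₀, hL₀, hspan⟩ := isCLL_inf h1 h2
  have hfr₁ : Module.finrank ℝ (Submodule.span ℝ (Set.range L₁)) = m := by
    exact (Matrix.rank_eq_finrank_span_row L₁).symm.trans h1.1.1
  have hfr₂ : Module.finrank ℝ (Submodule.span ℝ (Set.range L₂)) = m := by
    exact (Matrix.rank_eq_finrank_span_row L₂).symm.trans h2.1.1
  have hge : m ≤ Module.finrank ℝ
      (Submodule.span ℝ (Set.range L₁) ⊓ Submodule.span ℝ (Set.range L₂) :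
        Submodule ℝ (Fin n → ℝ)) := hmin _ L₀ hL₀
  have hle : Module.finrank ℝ
      (Submodule.span ℝ (Set.range L₁) ⊓ Submodule.span ℝ (Set.range L₂) :
        Submodule ℝ (Fin n → ℝ)) ≤ m :=
    le_of_le_of_eq (Submodule.finrank_mono inf_le_left) hfr₁
  have hVV₁ : (Submodule.span ℝ (Set.range L₁) ⊓ Submodule.span ℝ (Set.range L₂) :
      Submodule ℝ (Fin n → ℝ)) = Submodule.span ℝ (Set.range L₁) :=
    Submodule.eq_of_le_of_finrank_eq inf_le_left (by rw [hfr₁]; omega)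
  have hVV₂ : (Submodule.span ℝ (Set.range L₁) ⊓ Submodule.span ℝ (Set.range L₂) :
      Submodule ℝ (Fin n → ℝ)) = Submodule.span ℝ (Set.range L₂) :=
    Submodule.eq_of_le_of_finrank_eq inf_le_right (by rw [hfr₂]; omega)
  have hmain : Submodule.span ℝ (Set.range L₁) = Submodule.span ℝ (Set.range L₂) :=
    hVV₁ ▸ hVV₂
  refine ⟨hmain, ?_⟩
  -- construct T
  have hrow : ∀ i, (L₂ i : Fin n → ℝ) ∈ Submodule.span ℝ (Set.range L₁) := by
    intro i
    rw [hmain]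
    exact Submodule.subset_span ⟨i, rfl⟩
  have hc : ∀ i, ∃ c : Fin m → ℝ, ∑ k, c k • L₁ k = L₂ i :=
    fun i => (Submodule.mem_span_range_iff_exists_fun ℝ).mp (hrow i)
  choose T hT using hc
  have hTL : L₂ = Matrix.of T * L₁ := by
    ext i j
    rw [Matrix.mul_apply]
    have := congrFun (hT i) j
    simpa using this.symm
  refine ⟨Matrix.of T, ?_, hTL⟩
  rw [Matrix.isUnit_iff_isUnit_det, isUnit_iff_ne_zero]
  intro hdet
  obtain ⟨v, hv0, hvT⟩ := (Matrix.exists_vecMul_eq_zero_iff).mpr hdet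
  have hli₂ : LinearIndependent ℝ L₂ := by
    rw [show LinearIndependent ℝ L₂ ↔ LinearIndependent ℝ L₂.row from Iff.rfl,
      linearIndependent_iff_card_eq_finrank_span]
    have := Matrix.rank_eq_finrank_span_row L₂
    rw [h2.1.1] at this
    simpa [Set.finrank] using this
  have hvL₂ : ∑ i, v i • L₂ i = 0 := by
    have hz : Matrix.vecMul v L₂ = 0 := by
      rw [hTL, ← Matrix.vecMul_vecMul, hvT, Matrix.zero_vecMul]
    funext j
    have hj := congrFun hz j
    simpa [Matrix.vecMul, dotProduct, Finset.sum_apply] using hj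
  have := Fintype.linearIndependent_iff.mp hli₂ v hvL₂
  exact hv0 (funext this)
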